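/- The frame components satisfy the 'gθθ' relations g_{cd}θ^d_jθ^c_i = α⁻²r⁻²·g_{ij}: for all i, j ∈ {−,0,+}, s⁻¹·θ⁺_jθ⁻_i + θ⁰_jθ⁰_i + s·θ⁻_jθ⁺_i = α⁻²ρ'²·g_{ij}, where g_{−+} = s⁻¹, g_{00} = 1, g_{+−} = s and all other g_{ij} = 0. -/

import Mathlib

theorem stmt10 {K A : Type*} [Field K] [CharZero K] [Ring A] [Algebra K A]
    (q s : K) (hq : q ≠ 0) (hs : s ≠ 0) (hsq : s ^ 2 = q)
    (xm x0 xp : A)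
    (hx1 : xm * x0 = q • (x0 * xm))
    (hx2 : xp * x0 = q⁻¹ • (x0 * xp))
    (hx3 : xp * xm - xm * xp = (s - s⁻¹) • (x0 * x0))
    (α : K) (hα : α ≠ 0)
    (v ρ ρ' : A)
    (hv1 : x0 * v = 1) (hv2 : v * x0 = 1)
    (hρ2 : ρ * ρ = s⁻¹ • (xm * xp) + x0 * x0 + s • (xp * xm))
    (hρxm : ρ * xm = xm * ρ) (hρx0 : ρ * x0 = x0 * ρ) (hρxp : ρ * xp = xp * ρ)
    (hρi1 : ρ * ρ' = 1) (hρi2 : ρ' * ρ = 1)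
    (θf : Fin 3 → Fin 3 → A)
    (hθf : θf = ![![α⁻¹ • v, 0, 0],
                  ![(α⁻¹ * s * (q + 1)) • (ρ' * v * xp), α⁻¹ • ρ', 0],
                  ![(-(α⁻¹ * s * q * (q + 1))) • (ρ' * ρ' * v * (xp * xp)),
                    (-(α⁻¹ * (q + 1))) • (ρ' * ρ' * xp), α⁻¹ • (ρ' * ρ' * x0)]])
    (gm : Fin 3 → Fin 3 → K)
    (hgm : gm = ![![0, 0, s⁻¹], ![0, 1, 0], ![s, 0, 0]]) :
    ∀ i j : Fin 3,
      s⁻¹ • (θf 2 j * θf 0 i) + θf 1 j * θf 1 i + s • (θf 0 j * θf 2 i)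
        = (α⁻¹ * α⁻¹ * gm i j) • (ρ' * ρ') := by
  subst hsq
  -- conjugation lemma: inverse commutes too
  have conj : ∀ u u' y : A, u * u' = 1 → u' * u = 1 → u * y = y * u → u' * y = y * u' := by
    intro u u' y h1 h2 h
    calc u' * y = u' * y * (u * u') := by rw [h1, mul_one]
      _ = u' * (y * u) * u' := by rw [← mul_assoc, ← mul_assoc]
      _ = u' * (u * y) * u' := by rw [h]
      _ = u' * u * y * u' := by rw [← mul_assoc]
      _ = y * u' := by rw [h2, one_mul]
  have hρv : ρ * v = v * ρ := by
    calc ρ * v = v * x0 * ρ * v := by rw [hv2, one_mul]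
      _ = v * (x0 * ρ) * v := by rw [mul_assoc v x0 ρ]
      _ = v * (ρ * x0) * v := by rw [hρx0]
      _ = v * ρ * (x0 * v) := by rw [← mul_assoc, mul_assoc]
      _ = v * ρ := by rw [hv1, mul_one]
  have hρ'x0 : x0 * ρ' = ρ' * x0 := (conj ρ ρ' x0 hρi1 hρi2 hρx0).symm
  have hρ'xp : xp * ρ' = ρ' * xp := (conj ρ ρ' xp hρi1 hρi2 hρxp).symm
  have hρ'v : v * ρ' = ρ' * v := (conj ρ ρ' v hρi1 hρi2 hρv).symm
  -- xp and v commutation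
  have hxpv : xp * v = (s^2) • (v * xp) := by
    have h1 : v * (xp * x0) * v = (s^2)⁻¹ • (v * (x0 * xp) * v) := by
      rw [hx2, mul_smul_comm, smul_mul_assoc]
    have h2 : v * xp = (s^2)⁻¹ • (xp * v) := by
      calc v * xp = v * xp * (x0 * v) := by rw [hv1, mul_one]
        _ = v * (xp * x0) * v := by rw [← mul_assoc, ← mul_assoc]
        _ = (s^2)⁻¹ • (v * (x0 * xp) * v) := h1
        _ = (s^2)⁻¹ • (v * x0 * (xp * v)) := by rw [← mul_assoc, mul_assoc]
        _ = (s^2)⁻¹ • (xp * v) := by rw [hv2, one_mul]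
    rw [h2, smul_smul]
    field_simp
    rw [one_smul]
  -- nested swap lemmas (normal order: ρ' < v < x0 < xp)
  have swap : ∀ a b : A, a * b = b * a → ∀ t : A, a * (b * t) = b * (a * t) := by
    intro a b h t; rw [← mul_assoc, h, mul_assoc]
  have nρ'x0 := swap x0 ρ' hρ'x0
  have nρ'xp := swap xp ρ' hρ'xp
  have nρ'v := swap v ρ' hρ'v
  have nxpv : ∀ t : A, xp * (v * t) = (s^2) • (v * (xp * t)) := by
    intro t; rw [← mul_assoc, hxpv, smul_mul_assoc, mul_assoc]
  have nv1 : ∀ t : A, x0 * (v * t) = t := by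
    intro t; rw [← mul_assoc, hv1, one_mul]
  have nv2 : ∀ t : A, v * (x0 * t) = t := by
    intro t; rw [← mul_assoc, hv2, one_mul]
  intro i j
  fin_cases i <;> fin_cases j <;>
    simp only [hθf, hgm, Fin.isValue, Matrix.cons_val', Matrix.cons_val_zero, Matrix.cons_val_one,
      Matrix.head_cons, Matrix.head_fin_const, Matrix.cons_val_two, Matrix.tail_cons,
      Matrix.empty_val', Matrix.cons_val_fin_one, Matrix.cons_val_two] <;>
    simp [mul_assoc, smul_mul_assoc, mul_smul_comm, smul_smul, hρ'x0, hρ'xp, hρ'v, hxpv, hv1, hv2, Matrix.vecHead, Matrix.vecTail,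
      nρ'x0, nρ'xp, nρ'v, nxpv, nv1, nv2] <;>
    match_scalars <;> field_simp <;> ring
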